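/- For every finite word w, the infinite defect D_∞(w) = min{D(z) : z an infinite word over Alph(w) containing w as a factor} is finite; in particular the periodic word (w^(+))^∞ has finite defect. -/

import Mathlib

open List

variable {A : Type*}

/-- All factors (contiguous subwords) of a word, as a list. -/
def Factors (w : List A) : List (List A) := w.tails.flatMap List.inits

/-- The set of distinct palindromic factors of `w` (including the empty word). -/
def palFactors [DecidableEq A] (w : List A) : Finset (List A) :=
  ((Factors w).filter (fun u => decide (u.reverse = u))).toFinset

/-- A word is rich if it has exactly `|w| + 1` distinct palindromic factors. -/
def IsRich [DecidableEq A] (w : List A) : Prop :=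
  (palFactors w).card = w.length + 1

/-- The defect of a finite word. -/
def defect [DecidableEq A] (w : List A) : ℕ :=
  w.length + 1 - (palFactors w).card

/-- `u` is a (finite) factor of the infinite word `z`. -/
def FactorOfInf (u : List A) (z : ℕ → A) : Prop :=
  ∃ i, u = (List.range u.length).map (fun k => z (i + k))

/-- An infinite word is rich if all of its finite factors are rich. -/
def InfRich [DecidableEq A] (z : ℕ → A) : Prop :=
  ∀ u : List A, FactorOfInf u z → IsRich u

/-- The longest palindromic suffix of `w`. -/
def lps [DecidableEq A] (w : List A) : List A :=
  (w.tails.find? (fun u => decide (u.reverse = u))).getD []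

/-- The number of occurrences of `u` as a factor of `w` (counted by position). -/
def occCount [DecidableEq A] (u w : List A) : ℕ :=
  w.tails.countP (fun t => decide (u <+: t))

/-- The periodic infinite word `u^∞`. -/
def periodicWord (u : List A) (hu : u ≠ []) : ℕ → A :=
  fun i => u.get ⟨i % u.length, Nat.mod_lt _ (List.length_pos_iff.mpr hu)⟩

section Aux

lemma mem_Factors {v u : List A} : v ∈ Factors u ↔ v <:+: u := by
  simp only [Factors, List.mem_flatMap, List.mem_tails, List.mem_inits]
  constructor
  · rintro ⟨t, ht, hv⟩
    exact hv.isInfix.trans ht.isInfix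
  · rintro ⟨s, t, rfl⟩
    exact ⟨v ++ t, ⟨s, by rw [List.append_assoc]⟩, ⟨t, rfl⟩⟩

lemma mem_palFactors [DecidableEq A] {v u : List A} :
    v ∈ palFactors u ↔ v <:+: u ∧ v.reverse = v := by
  simp [palFactors, mem_Factors]

def seg (z : ℕ → A) (a ℓ : ℕ) : List A := (List.range ℓ).map (fun k => z (a + k))

@[simp] lemma seg_length (z : ℕ → A) (a ℓ : ℕ) : (seg z a ℓ).length = ℓ := by
  simp [seg]

lemma seg_getElem (z : ℕ → A) (a ℓ k : ℕ) (h : k < ℓ) :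
    (seg z a ℓ)[k]'(by simpa using h) = z (a + k) := by
  simp [seg]

lemma seg_append (z : ℕ → A) (a ℓ₁ ℓ₂ : ℕ) :
    seg z a (ℓ₁ + ℓ₂) = seg z a ℓ₁ ++ seg z (a + ℓ₁) ℓ₂ := by
  apply List.ext_getElem
  · simp
  · intro k h1 h2
    simp only [seg_length] at h1
    rcases Nat.lt_or_ge k ℓ₁ with hk | hk
    · rw [List.getElem_append_left (by simpa using hk)]
      rw [seg_getElem _ _ _ _ h1, seg_getElem _ _ _ _ hk]
    · rw [List.getElem_append_right (by simpa using hk)]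
      simp only [seg_length]
      rw [seg_getElem _ _ _ _ h1, seg_getElem _ _ _ _ (by omega)]
      congr 1; omega

lemma seg_infix (z : ℕ → A) (i n a ℓ : ℕ) (h1 : i ≤ a) (h2 : a + ℓ ≤ i + n) :
    seg z a ℓ <:+: seg z i n := by
  have hn : n = (a - i) + ℓ + (i + n - (a + ℓ)) := by omega
  rw [hn, seg_append, seg_append]
  have : i + (a - i) = a := by omega
  rw [this]
  have h3 : i + (a - i + ℓ) = a + ℓ := by omega
  rw [h3]
  exact ⟨seg z i (a - i), seg z (a + ℓ) (i + n - (a + ℓ)), by rw [List.append_assoc]⟩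

lemma seg_palindrome (z : ℕ → A) (a ℓ : ℕ)
    (h : ∀ k, k < ℓ → z (a + k) = z (a + (ℓ - 1 - k))) :
    (seg z a ℓ).reverse = seg z a ℓ := by
  apply List.ext_getElem
  · simp
  · intro k h1 h2
    simp only [length_reverse, seg_length] at h1 h2
    rw [List.getElem_reverse]
    simp only [seg_length]
    rw [seg_getElem _ _ _ _ (by omega), seg_getElem _ _ _ _ h1]
    exact (h k h1).symm

lemma card_palFactors_ge [DecidableEq A] (u : List A) (m : ℕ) (f : ℕ → List A)
    (hmem : ∀ j < m, f j ∈ palFactors u)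
    (hinj : ∀ j < m, ∀ j' < m, f j = f j' → j = j')
    (hne : ∀ j < m, f j ≠ []) :
    m + 1 ≤ (palFactors u).card := by
  have hsub : (Finset.range m).image f ∪ {([] : List A)} ⊆ palFactors u := by
    intro v hv
    simp only [Finset.mem_union, Finset.mem_image, Finset.mem_range, Finset.mem_singleton] at hv
    rcases hv with ⟨j, hj, rfl⟩ | rfl
    · exact hmem j hj
    · exact mem_palFactors.mpr ⟨nil_infix (l := u), rfl⟩
  have hcard : ((Finset.range m).image f ∪ {([] : List A)}).card = m + 1 := by
    rw [Finset.card_union_of_disjoint]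
    · rw [Finset.card_image_of_injOn, Finset.card_range, Finset.card_singleton]
      intro j hj j' hj' h
      exact hinj j (Finset.mem_range.mp hj) j' (Finset.mem_range.mp hj') h
    · simp only [Finset.disjoint_singleton_right, Finset.mem_image, Finset.mem_range]
      rintro ⟨j, hj, h⟩
      exact hne j hj h
  calc m + 1 = _ := hcard.symm
    _ ≤ _ := Finset.card_le_card hsub

lemma defect_le_of [DecidableEq A] (u : List A) (c : ℕ)
    (h : u.length + 1 ≤ (palFactors u).card + c) : defect u ≤ c := by
  unfold defect; omega

lemma card_palFactors_pos [DecidableEq A] (u : List A) : 1 ≤ (palFactors u).card := by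
  apply Finset.card_pos.mpr
  exact ⟨[], mem_palFactors.mpr ⟨nil_infix (l := u), rfl⟩⟩

lemma factorOfInf_iff_seg {u : List A} {z : ℕ → A} :
    FactorOfInf u z ↔ ∃ i, u = seg z i u.length := Iff.rfl

lemma part1 [DecidableEq A] (w : List A) (hw : w ≠ []) :
    ∃ z : ℕ → A, (∀ i, z i ∈ w) ∧ FactorOfInf w z ∧
       ∃ C : ℕ, ∀ u : List A, FactorOfInf u z → defect u ≤ C := by
  set a := w.getLast hw with ha
  set z : ℕ → A := fun i => if h : i < w.length then w.get ⟨i, h⟩ else a with hz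
  have hza : ∀ x, w.length ≤ x → z x = a := by
    intro x hx
    simp only [hz]
    rw [dif_neg (by omega)]
  refine ⟨z, ?_, ?_, w.length, ?_⟩
  · intro i
    simp only [hz]
    split
    · exact List.get_mem _ _
    · exact List.getLast_mem hw
  · refine ⟨0, ?_⟩
    apply List.ext_getElem
    · simp
    · intro k h1 h2
      simp only [List.getElem_map, List.getElem_range]
      simp only [hz, Nat.zero_add]
      rw [dif_pos h1]
      rfl
  · rintro u ⟨i, hu⟩
    replace hu : u = seg z i u.length := hu
    set n := u.length with hn
    set k := n - (w.length - i) with hk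
    have hcard : k + 1 ≤ (palFactors u).card := by
      apply card_palFactors_ge u k (fun j => seg z (i + n - (j + 1)) (j + 1))
      · intro j hj
        rw [mem_palFactors]
        constructor
        · rw [hu]
          apply seg_infix <;> omega
        · apply seg_palindrome
          intro k' hk'
          rw [hza _ (by omega), hza _ (by omega)]
      · intro j hj j' hj' h
        have := congrArg List.length h
        rw [seg_length, seg_length] at this
        omega
      · intro j hj h
        have := congrArg List.length h
        rw [seg_length] at this
        simp at this
    apply defect_le_of
    have : u.length = n := hn.symm
    omega

-- helper: minimal a ≥ 0 offset s.t. (x + o) % d = 0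
lemma mod_helper (d x : ℕ) (hd : 0 < d) : (x + (d - x % d) % d) % d = 0 := by
  rcases Nat.eq_zero_or_pos (x % d) with h0 | h0
  · rw [h0, Nat.sub_zero, Nat.mod_self, Nat.add_zero, h0]
  · have hr : x % d < d := Nat.mod_lt _ hd
    obtain ⟨q, hq⟩ : ∃ q, x = d * q + x % d := ⟨x / d, (Nat.div_add_mod x d).symm⟩
    rw [Nat.mod_eq_of_lt (by omega : d - x % d < d)]
    have h1 : x + (d - x % d) = d * (q + 1) := by
      have h2 : d * (q + 1) = d * q + d := by ring
      omega
    rw [h1, Nat.mul_mod_right]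

lemma mod_shift_eq (d a x : ℕ) (hd : 0 < d) :
    (a + (x % d + d - a % d) % d) % d = x % d := by
  have hr : a % d < d := Nat.mod_lt _ hd
  obtain ⟨q, hq⟩ : ∃ q, a = d * q + a % d := ⟨a / d, (Nat.div_add_mod a d).symm⟩
  rw [Nat.add_mod_mod]
  have h1 : a + (x % d + d - a % d) = d * (q + 1) + x % d := by
    have h2 : d * (q + 1) = d * q + d := by ring
    omega
  rw [h1, Nat.mul_add_mod]
  exact Nat.mod_mod_of_dvd _ dvd_rfl

lemma part2 [DecidableEq A] (p : List A) (hpal : p.reverse = p) (hp : p ≠ []) :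
    ∃ C : ℕ, ∀ u : List A, FactorOfInf u (periodicWord p hp) → defect u ≤ C := by
  classical
  set z := periodicWord p hp with hzdef
  set L := p.length with hLdef
  have hL : 0 < L := List.length_pos_iff.mpr hp
  -- z depends only on residue mod L
  have hzmod : ∀ x y : ℕ, x % L = y % L → z x = z y := by
    intro x y h
    simp only [hzdef, periodicWord]
    congr 1
    exact Fin.ext h
  -- symmetry mod L
  have hsymL : ∀ i j : ℕ, (i + j + 1) % L = 0 → z i = z j := by
    intro i j h
    have hi : i % L < L := Nat.mod_lt _ hL
    have hj : j % L < L := Nat.mod_lt _ hL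
    have hsum : i % L + j % L + 1 = L := by
      have hme : (i % L + j % L + 1) % L = (i + j + 1) % L :=
        (((Nat.mod_modEq i L).add (Nat.mod_modEq j L)).add_right 1)
      have h2 : (i % L + j % L + 1) % L = 0 := by rw [hme, h]
      obtain ⟨c, hc⟩ := Nat.dvd_of_mod_eq_zero h2
      match c with
      | 0 => omega
      | 1 => omega
      | (c + 2) =>
        have : L * 2 ≤ L * (c + 2) := Nat.mul_le_mul_left L (by omega)
        omega
    simp only [hzdef, periodicWord, List.get_eq_getElem]
    have hrl : i % L < p.reverse.length := by simpa using hi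
    have e1 : p[i % L]'hi = p.reverse[i % L]'hrl := List.getElem_of_eq hpal.symm hi
    have e2 : p.reverse[i % L]'hrl = p[p.length - 1 - (i % L)]'(by simp only [← hLdef]; omega) :=
      List.getElem_reverse ..
    rw [e1, e2]
    have hidx : p.length - 1 - (i % L) = j % L := by simp only [← hLdef]; omega
    simp only [hidx]
    rfl
  -- minimal period
  have hPL : 0 < L ∧ ∀ x, z (x + L) = z x :=
    ⟨hL, fun x => hzmod _ _ (Nat.add_mod_right x L)⟩
  have hex : ∃ e, 0 < e ∧ ∀ x, z (x + e) = z x := ⟨L, hPL⟩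
  set d := Nat.find hex with hddef
  obtain ⟨hd0, hdper⟩ := Nat.find_spec hex
  have hdmin : ∀ e, e < d → ¬(0 < e ∧ ∀ x, z (x + e) = z x) := fun e he => Nat.find_min hex he
  have hdL' : d ≤ L := Nat.find_le hPL
  have hmul : ∀ (e : ℕ), (∀ x, z (x + e) = z x) → ∀ x m, z (x + m * e) = z x := by
    intro e he x m
    induction m with
    | zero => simp
    | succ m ih =>
        have : x + (m + 1) * e = (x + m * e) + e := by ring
        rw [this, he, ih]
  have hdzmod : ∀ x y : ℕ, x % d = y % d → z x = z y := by
    intro x y h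
    have hx : z x = z (x % d) := by
      have hxe : x = x % d + (x / d) * d := by
        have h' := Nat.div_add_mod x d
        rw [Nat.mul_comm d (x / d)] at h'
        omega
      calc z x = z (x % d + (x / d) * d) := congrArg z hxe
        _ = z (x % d) := hmul d hdper _ _
    have hy : z y = z (y % d) := by
      have hye : y = y % d + (y / d) * d := by
        have h' := Nat.div_add_mod y d
        rw [Nat.mul_comm d (y / d)] at h'
        omega
      calc z y = z (y % d + (y / d) * d) := congrArg z hye
        _ = z (y % d) := hmul d hdper _ _
    rw [hx, hy, h]
  -- d divides L
  have hdL : d ∣ L := by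
    have hg : 0 < Nat.gcd d L := Nat.gcd_pos_of_pos_left _ hd0
    have hgper : ∀ x, z (x + Nat.gcd d L) = z x := by
      obtain ⟨α, β, hab⟩ : ∃ α β : ℕ, α * d = Nat.gcd d L + β * L := by
        have h := Nat.gcd_eq_gcd_ab d L
        set a := Nat.gcdA d L with hadef
        set b := Nat.gcdB d L with hbdef
        set k : ℤ := |a| + |b| + 1 with hkdef
        have hk0 : 0 < k := by positivity
        have hla : (0:ℤ) ≤ |a| := abs_nonneg a
        have hlb : (0:ℤ) ≤ |b| := abs_nonneg b
        have hdz : (1:ℤ) ≤ d := by exact_mod_cast hd0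
        have hLz : (1:ℤ) ≤ L := by exact_mod_cast hL
        have h1 : (0:ℤ) ≤ a + k * L := by
          have : k * 1 ≤ k * L := by
            apply mul_le_mul_of_nonneg_left hLz (le_of_lt hk0)
          have ha : -|a| ≤ a := neg_abs_le a
          simp only [mul_one] at this
          omega
        have h2 : (0:ℤ) ≤ k * d - b := by
          have : k * 1 ≤ k * d := by
            apply mul_le_mul_of_nonneg_left hdz (le_of_lt hk0)
          have hb : b ≤ |b| := le_abs_self b
          simp only [mul_one] at this
          omega
        refine ⟨(a + k * L).toNat, (k * d - b).toNat, ?_⟩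
        have key : ((a + k * L).toNat : ℤ) * d = (Nat.gcd d L : ℤ) + ((k * d - b).toNat : ℤ) * L := by
          rw [Int.toNat_of_nonneg h1, Int.toNat_of_nonneg h2]
          rw [h]; ring
        exact_mod_cast key
      intro x
      have e1 : z (x + Nat.gcd d L + β * L) = z (x + Nat.gcd d L) := hmul L hPL.2 _ _
      have e2 : z (x + α * d) = z x := hmul d hdper _ _
      have e3 : x + Nat.gcd d L + β * L = x + α * d := by omega
      rw [← e1, e3, e2]
    have hgle : Nat.gcd d L ≤ d := Nat.le_of_dvd hd0 (Nat.gcd_dvd_left d L)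
    have : ¬ (Nat.gcd d L < d) := fun hlt => hdmin _ hlt ⟨hg, hgper⟩
    have : Nat.gcd d L = d := by omega
    rw [← this]
    exact Nat.gcd_dvd_right d L
  -- symmetry mod d
  have hsymd : ∀ i j : ℕ, (i + j + 1) % d = 0 → z i = z j := by
    intro i j h
    obtain ⟨c, hc⟩ := hdL
    have hc0 : 0 < c := by
      rcases Nat.eq_zero_or_pos c with h0 | h0
      · rw [h0, Nat.mul_zero] at hc; omega
      · exact h0
    obtain ⟨m, hm⟩ := Nat.dvd_of_mod_eq_zero h
    set t := c - m % c with htdef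
    have hct : c ∣ m + t := by
      have h1 : m % c < c := Nat.mod_lt _ hc0
      obtain ⟨q, hq⟩ : ∃ q, m = c * q + m % c := ⟨m / c, (Nat.div_add_mod m c).symm⟩
      refine ⟨q + 1, ?_⟩
      have h2 : c * (q + 1) = c * q + c := by ring
      omega
    obtain ⟨e, he⟩ := hct
    have hLdvd : (i + (j + t * d) + 1) % L = 0 := by
      have : i + (j + t * d) + 1 = L * e := by
        rw [hc] at *
        calc i + (j + t * d) + 1 = (i + j + 1) + t * d := by ring
        _ = d * m + t * d := by omega
        _ = (m + t) * d := by ring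
        _ = d * c * e := by rw [he]; ring
        _ = d * c * e := rfl
      rw [this, Nat.mul_mod_right]
    have e1 : z i = z (j + t * d) := hsymL _ _ hLdvd
    have e2 : z (j + t * d) = z j := hmul d hdper _ _
    rw [e1, e2]
  -- main bound
  refine ⟨2 * L, ?_⟩
  rintro u ⟨i, hu⟩
  replace hu : u = seg z i u.length := hu
  set n := u.length with hn
  set m := n - (2 * d - 2) with hmdef
  -- for each j < m, a palindromic factor
  set o : ℕ → ℕ := fun j => (d - (2 * i + (j + (2 * d - 2)) + 1) % d) % d with hodef
  have ho_lt : ∀ j, o j < d := fun j => Nat.mod_lt _ hd0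
  set f : ℕ → List A := fun j => seg z (i + o j) (j + (2 * d - 2) - o j + 1) with hfdef
  have hkey : ∀ j, ((i + o j) + (i + (j + (2 * d - 2))) + 1) % d = 0 := by
    intro j
    have := mod_helper d (2 * i + (j + (2 * d - 2)) + 1) hd0
    have harith : (i + o j) + (i + (j + (2 * d - 2))) + 1
        = (2 * i + (j + (2 * d - 2)) + 1) + o j := by ring
    rw [harith]
    rw [Nat.add_comm _ (o j)] at this ⊢
    exact this
  have hflen : ∀ j, (f j).length = j + (2 * d - 2) - o j + 1 := fun j => seg_length _ _ _
  have hfpal : ∀ j, (f j).reverse = f j := by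
    intro j
    apply seg_palindrome
    intro k hk
    set a := i + o j with hadef
    set ℓ := j + (2 * d - 2) - o j + 1 with hldef
    apply hsymd
    have h1 : a + k + (a + (ℓ - 1 - k)) + 1 = a + (i + (j + (2 * d - 2))) + 1 := by
      have := ho_lt j
      omega
    rw [h1]
    exact hkey j
  have hfmem : ∀ j < m, f j ∈ palFactors u := by
    intro j hj
    rw [mem_palFactors]
    refine ⟨?_, hfpal j⟩
    rw [hu]
    apply seg_infix
    · omega
    · have := ho_lt j
      omega
  have hfne : ∀ j < m, f j ≠ [] := by
    intro j hj h
    have := congrArg List.length h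
    rw [hflen] at this
    simp at this
  -- injectivity
  have hfinj : ∀ j < m, ∀ j' < m, f j = f j' → j = j' := by
    have key : ∀ j j', j < j' → f j = f j' → False := by
      intro j j' hjj' heq
      set a := i + o j with hadef
      set a' := i + o j' with hadef'
      set ℓ := j + (2 * d - 2) - o j + 1 with hldef
      set ℓ' := j' + (2 * d - 2) - o j' + 1 with hldef'
      have hlen : ℓ = ℓ' := by
        have := congrArg List.length heq
        rw [hflen, hflen] at this
        exact this
      have hol : o j < d := ho_lt j
      have hol' : o j' < d := ho_lt j'
      -- s := o j' - o j = j' - j shift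
      have hs1 : o j < o j' := by omega
      set s := o j' - o j with hsdef
      have hs0 : 0 < s := by omega
      have hsd : s < d := by omega
      -- residue relation: 2s ≡ 0 mod d
      have h2s : 2 * s = d := by
        have k1 := hkey j
        have k2 := hkey j'
        have e1 : a' + (i + (j' + (2 * d - 2))) + 1
            = (a + (i + (j + (2 * d - 2))) + 1) + 2 * s := by
          simp only [hadef, hadef', hsdef]
          omega
        rw [e1, Nat.add_mod, k1, Nat.zero_add, Nat.mod_mod_of_dvd _ dvd_rfl] at k2
        obtain ⟨c, hc⟩ := Nat.dvd_of_mod_eq_zero k2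
        match c with
        | 0 => omega
        | 1 => omega
        | (c + 2) =>
          have : d * 2 ≤ d * (c + 2) := Nat.mul_le_mul_left d (by omega)
          omega
      -- word equality pointwise
      have hpw : ∀ k, k < ℓ → z (a + k) = z (a + s + k) := by
        intro k hk
        have h1 := seg_getElem z a ℓ k hk
        have h2 := seg_getElem z a' ℓ' k (by omega)
        have heq' : seg z a ℓ = seg z a' ℓ' := heq
        have ha' : a' = a + s := by simp only [hadef, hadef', hsdef]; omega
        rw [← h1]
        rw [← ha']
        rw [← h2]
        exact List.getElem_of_eq heq' _
      have hld : d ≤ ℓ := by omega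
      -- derive z has period s
      have hper_s : ∀ x, z (x + s) = z x := by
        intro x
        set k := (x % d + d - a % d) % d with hkdef2
        have hkd : k < d := Nat.mod_lt _ hd0
        have hxk : (a + k) % d = x % d := by
          have := mod_shift_eq d a x hd0
          exact this
        have e1 : z x = z (a + k) := hdzmod _ _ hxk.symm
        have e2 : z (x + s) = z (a + k + s) := by
          apply hdzmod
          rw [Nat.add_mod x s, Nat.add_mod (a + k) s, hxk]
        have e3 : z (a + k) = z (a + s + k) := hpw k (by omega)
        rw [e2, e1, e3]
        congr 1
        ring
      exact hdmin s (by omega) ⟨hs0, hper_s⟩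
    intro j hj j' hj' heq
    rcases Nat.lt_trichotomy j j' with h | h | h
    · exact absurd heq (fun he => key j j' h he)
    · exact h
    · exact absurd heq.symm (fun he => key j' j h he)
  have hcard := card_palFactors_ge u m f hfmem hfinj hfne
  apply defect_le_of
  omega

end Aux

theorem infinite_defect_finite [DecidableEq A] (w : List A) (hw : w ≠ []) :
    (∃ z : ℕ → A, (∀ i, z i ∈ w) ∧ FactorOfInf w z ∧
       ∃ C : ℕ, ∀ u : List A, FactorOfInf u z → defect u ≤ C) ∧
    (∀ p : List A, p.reverse = p → w <+: p →
      (∀ q : List A, q.reverse = q → w <+: q → p.length ≤ q.length) →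
      ∀ hp : p ≠ [],
        ∃ C : ℕ, ∀ u : List A, FactorOfInf u (periodicWord p hp) → defect u ≤ C) := by
  constructor
  · exact part1 w hw
  · intro p hpalin _hpref _hmin hp
    exact part2 p hpalin hp
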